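/- arXiv:2208.05084 — 3 statements merged into one kernel-verified Lean document; each statement's English description precedes it below -/
import Mathlib

section
/- For every x ∈ L_{2,∞}(0,1), the function Tx defined by (Tx)(t) = t^{-1/2} ∫_0^t x(s) ds + ∫_t^1 x(s) s^{-1/2} ds satisfies |(Tx)(t)| ≤ ‖x‖_{2,∞} · log(e²/t) for all t ∈ (0,1). -/
open MeasureTheory Set
open scoped ENNReal NNReal

/-- Lebesgue measure on `(0,1)`. -/
noncomputable def nu : Measure ℝ := volume.restrict (Set.Ioo 0 1)

/-- Decreasing rearrangement of a function on `(0,1)`. -/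
noncomputable def mu (f : ℝ → ℝ) (t : ℝ) : ℝ :=
  sInf {s : ℝ | 0 ≤ s ∧ nu {u | s < |f u|} ≤ ENNReal.ofReal t}

/-- `(Tx)(t) = t^{-1/2} ∫_0^t x(s) ds + ∫_t^1 x(s) s^{-1/2} ds`. -/
noncomputable def T (x : ℝ → ℝ) (t : ℝ) : ℝ :=
  t ^ (-(1:ℝ)/2) * (∫ s in Set.Ioc (0:ℝ) t, x s) + ∫ s in Set.Ioc t (1:ℝ), x s * s ^ (-(1:ℝ)/2)

/-- The Lorentz `L_{2,∞}` (quasi-)norm on `(0,1)`: `sup_{t>0} t^{1/2} μ(t,x)`. -/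
noncomputable def norm2inf (x : ℝ → ℝ) : ℝ :=
  sSup {r : ℝ | ∃ t > (0:ℝ), r = Real.sqrt t * mu x t}

lemma nu_fin : nu univ ≤ 1 := by
  simp only [nu, Measure.restrict_apply MeasurableSet.univ, univ_inter, Real.volume_Ioo]
  norm_num

lemma muSet_nonempty (x : ℝ → ℝ) (hx : Measurable x) {t : ℝ} (ht : 0 < t) :
    ∃ s, 0 ≤ s ∧ nu {u | s < |x u|} ≤ ENNReal.ofReal t := by
  have h : Filter.Tendsto (fun n : ℕ => nu {u | (n:ℝ) < |x u|}) Filter.atTop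
      (nhds (nu (⋂ n : ℕ, {u | (n:ℝ) < |x u|}))) := by
    apply tendsto_measure_iInter_atTop
    · intro n
      exact (measurableSet_lt measurable_const hx.abs).nullMeasurableSet
    · intro m n hmn u hu
      exact lt_of_le_of_lt (show (m:ℝ) ≤ n from Nat.cast_le.mpr hmn) hu
    · refine ⟨0, ?_⟩
      exact (lt_of_le_of_lt (le_trans (measure_mono (subset_univ _)) nu_fin)
        ENNReal.one_lt_top).ne
  have hempty : (⋂ n : ℕ, {u : ℝ | (n:ℝ) < |x u|}) = ∅ := by
    ext u; simp only [mem_iInter, mem_setOf_eq, mem_empty_iff_false, iff_false, not_forall, not_lt]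
    obtain ⟨n, hn⟩ := exists_nat_ge (|x u|)
    exact ⟨n, hn⟩
  rw [hempty, measure_empty] at h
  obtain ⟨n, hn⟩ :=
    (h.eventually_le_const (show (0:ℝ≥0∞) < ENNReal.ofReal t by simpa using ht)).exists
  exact ⟨n, Nat.cast_nonneg n, hn⟩

lemma mu_nonneg (x : ℝ → ℝ) (t : ℝ) : 0 ≤ mu x t :=
  Real.sInf_nonneg (fun _ hs => hs.1)

lemma mu_meas (x : ℝ → ℝ) (hx : Measurable x) {t : ℝ} (ht : 0 < t) :
    nu {u | mu x t < |x u|} ≤ ENNReal.ofReal t := by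
  set S := {s : ℝ | 0 ≤ s ∧ nu {u | s < |x u|} ≤ ENNReal.ofReal t} with hS
  have hne : S.Nonempty := by
    obtain ⟨s, h1, h2⟩ := muSet_nonempty x hx ht; exact ⟨s, h1, h2⟩
  have hbd : BddBelow S := ⟨0, fun s hs => hs.1⟩
  have hU : {u : ℝ | mu x t < |x u|} = ⋃ n : ℕ, {u | mu x t + 1/(n+1) < |x u|} := by
    ext u
    simp only [mem_setOf_eq, mem_iUnion]
    constructor
    · intro h
      obtain ⟨n, hn⟩ := exists_nat_one_div_lt (sub_pos.mpr h)
      exact ⟨n, by linarith [hn]⟩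
    · rintro ⟨n, hn⟩
      have : (0:ℝ) < 1/(n+1) := by positivity
      linarith
  rw [hU, Directed.measure_iUnion ?_]
  · apply iSup_le
    intro n
    have hlt : sInf S < mu x t + 1/(n+1) := by
      have h0 : (0:ℝ) < 1/(n+1) := by positivity
      have : sInf S = mu x t := rfl
      linarith
    obtain ⟨s, hsS, hs⟩ := (csInf_lt_iff hbd hne).mp hlt
    calc nu {u | mu x t + 1/(n+1) < |x u|} ≤ nu {u | s < |x u|} := by
          apply measure_mono; intro u hu; exact lt_of_le_of_lt hs.le hu
      _ ≤ ENNReal.ofReal t := hsS.2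
  · apply Monotone.directed_le
    intro m n hmn u hu
    have h1 : (1:ℝ)/(n+1) ≤ 1/(m+1) := by
      apply one_div_le_one_div_of_le (by positivity)
      have : (m:ℝ) ≤ n := Nat.cast_le.mpr hmn
      linarith
    simp only [mem_setOf_eq] at hu ⊢
    linarith

lemma sqrt_mu_le (x : ℝ → ℝ) (hbdd : BddAbove {r : ℝ | ∃ t > (0:ℝ), r = Real.sqrt t * mu x t}) {t : ℝ} (ht : 0 < t) : Real.sqrt t * mu x t ≤ norm2inf x :=
  le_csSup hbdd ⟨t, ht, rfl⟩

lemma norm2inf_nonneg (x : ℝ → ℝ) (hbdd : BddAbove {r : ℝ | ∃ t > (0:ℝ), r = Real.sqrt t * mu x t}) : 0 ≤ norm2inf x :=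
  le_trans (by simpa using mu_nonneg x 1) (sqrt_mu_le x hbdd one_pos)

lemma tail_bound_pos (x : ℝ → ℝ) (hx : Measurable x) (hbdd : BddAbove {r : ℝ | ∃ t > (0:ℝ), r = Real.sqrt t * mu x t}) (hN : 0 < norm2inf x) {l : ℝ} (hl : 0 < l) :
    nu {u | l < |x u|} ≤ ENNReal.ofReal (norm2inf x ^ 2 / l ^ 2) := by
  set N := norm2inf x
  set t0 : ℝ := N^2 / l^2 with ht0def
  have ht0 : 0 < t0 := by positivity
  have hsqrt : Real.sqrt t0 = N / l := by
    rw [ht0def, show N^2/l^2 = (N/l)^2 by ring, Real.sqrt_sq (by positivity)]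
  have hmu : mu x t0 ≤ l := by
    have h := sqrt_mu_le x hbdd ht0
    rw [hsqrt] at h
    have hNl : 0 < N / l := by positivity
    have h' : N/l * mu x t0 ≤ N := h
    by_contra hcon
    push_neg at hcon
    have h2 : (N/l) * l < (N/l) * mu x t0 := mul_lt_mul_of_pos_left hcon hNl
    have h3 : (N/l) * l = N := by field_simp
    linarith
  calc nu {u | l < |x u|} ≤ nu {u | mu x t0 < |x u|} := by
        apply measure_mono; intro u hu; exact lt_of_le_of_lt hmu hu
    _ ≤ ENNReal.ofReal t0 := mu_meas x hx ht0

lemma tail_bound_zero (x : ℝ → ℝ) (hx : Measurable x) (hbdd : BddAbove {r : ℝ | ∃ t > (0:ℝ), r = Real.sqrt t * mu x t}) (hN : norm2inf x = 0) :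
    nu {u | 0 < |x u|} = 0 := by
  have key : ∀ t : ℝ, 0 < t → nu {u | 0 < |x u|} ≤ ENNReal.ofReal t := by
    intro t ht
    have hmu0 : mu x t = 0 := by
      have h := sqrt_mu_le x hbdd ht
      rw [hN] at h
      have h1 : 0 < Real.sqrt t := Real.sqrt_pos.mpr ht
      nlinarith [mu_nonneg x t]
    have := mu_meas x hx ht
    rw [hmu0] at this
    exact this
  refine le_antisymm ?_ zero_le
  refine ENNReal.le_of_forall_pos_le_add ?_
  intro ε hε _
  calc nu {u | 0 < |x u|} ≤ ENNReal.ofReal ε := key ε (by exact_mod_cast hε)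
    _ = (ε : ℝ≥0∞) := ENNReal.ofReal_coe_nnreal
    _ ≤ 0 + ε := by simp

noncomputable def gg (t s : ℝ) : ℝ := min (t ^ (-(1:ℝ)/2)) (s ^ (-(1:ℝ)/2))

lemma gg_anti (t : ℝ) {a b : ℝ} (ha : 0 < a) (hab : a ≤ b) : gg t b ≤ gg t a :=
  min_le_min le_rfl (Real.rpow_le_rpow_of_nonpos ha hab (by norm_num))

lemma gg_meas (t : ℝ) : Measurable (fun s => ENNReal.ofReal (gg t s)) := by
  apply Measurable.ennreal_ofReal
  exact measurable_const.min (by fun_prop)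

lemma bathtub (t : ℝ) {E : Set ℝ} (hE : MeasurableSet E) (hE1 : E ⊆ Ioo 0 1)
    {m : ℝ} (hm : 0 < m) (hEm : volume E ≤ ENNReal.ofReal m) :
    ∫⁻ s in E, ENNReal.ofReal (gg t s) ≤ ∫⁻ s in Ioo 0 m, ENNReal.ofReal (gg t s) := by
  set M : Set ℝ := Ioo 0 m with hM
  have hMmeas : MeasurableSet M := measurableSet_Ioo
  have hvolM : volume M = ENNReal.ofReal m := by rw [hM, Real.volume_Ioo, sub_zero]
  set A : Set ℝ := E \ M with hA
  set B : Set ℝ := M \ E with hB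
  have hAmeas : MeasurableSet A := hE.diff hMmeas
  have hBmeas : MeasurableSet B := hMmeas.diff hE
  have hfin : volume (E ∩ M) ≠ ⊤ := by
    refine (lt_of_le_of_lt (le_trans (measure_mono inter_subset_left) hEm) ?_).ne
    exact ENNReal.ofReal_lt_top
  have hvolAB : volume A ≤ volume B := by
    have h1 : volume (E ∩ M) + volume A = volume E := measure_inter_add_diff E hMmeas
    have h2 : volume (M ∩ E) + volume B = volume M := measure_inter_add_diff M hE
    rw [inter_comm] at h2
    have : volume (E ∩ M) + volume A ≤ volume (E ∩ M) + volume B := by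
      rw [h1, h2, hvolM]; exact hEm
    exact (ENNReal.add_le_add_iff_left hfin).mp this
  set gm : ℝ≥0∞ := ENNReal.ofReal (gg t m) with hgm
  have hAle : ∫⁻ s in A, ENNReal.ofReal (gg t s) ≤ gm * volume A := by
    calc ∫⁻ s in A, ENNReal.ofReal (gg t s) ≤ ∫⁻ _ in A, gm := by
          apply setLIntegral_mono measurable_const
          intro s hs
          have h0 : 0 < s := (hE1 hs.1).1
          have hms : m ≤ s := by
            by_contra hc; push_neg at hc; exact hs.2 ⟨h0, hc⟩
          exact ENNReal.ofReal_le_ofReal (gg_anti t hm hms)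
      _ = gm * volume A := by rw [setLIntegral_const]
  have hBge : gm * volume B ≤ ∫⁻ s in B, ENNReal.ofReal (gg t s) := by
    calc gm * volume B = ∫⁻ _ in B, gm := (setLIntegral_const B gm).symm
      _ ≤ ∫⁻ s in B, ENNReal.ofReal (gg t s) := by
          apply setLIntegral_mono (gg_meas t)
          intro s hs
          exact ENNReal.ofReal_le_ofReal (gg_anti t hs.1.1 hs.1.2.le)
  have hsplitE : ∫⁻ s in E, ENNReal.ofReal (gg t s)
      = (∫⁻ s in E ∩ M, ENNReal.ofReal (gg t s)) + ∫⁻ s in A, ENNReal.ofReal (gg t s) := by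
    nth_rewrite 1 [show E = (E ∩ M) ∪ A by rw [hA, inter_union_diff]]
    apply lintegral_union hAmeas (show Disjoint (E ∩ M) A from
      Disjoint.mono_left inter_subset_right (disjoint_sdiff_right (s := M) (t := E)))
  have hsplitM : ∫⁻ s in M, ENNReal.ofReal (gg t s)
      = (∫⁻ s in E ∩ M, ENNReal.ofReal (gg t s)) + ∫⁻ s in B, ENNReal.ofReal (gg t s) := by
    nth_rewrite 1 [show M = (E ∩ M) ∪ B by rw [hB, inter_comm E M, inter_union_diff]]
    apply lintegral_union hBmeas (show Disjoint (E ∩ M) B from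
      Disjoint.mono_left inter_subset_left (disjoint_sdiff_right (s := E) (t := M)))
  calc ∫⁻ s in E, ENNReal.ofReal (gg t s)
      = (∫⁻ s in E ∩ M, ENNReal.ofReal (gg t s)) + ∫⁻ s in A, ENNReal.ofReal (gg t s) := hsplitE
    _ ≤ (∫⁻ s in E ∩ M, ENNReal.ofReal (gg t s)) + gm * volume A := by gcongr
    _ ≤ (∫⁻ s in E ∩ M, ENNReal.ofReal (gg t s)) + gm * volume B := by gcongr
    _ ≤ (∫⁻ s in E ∩ M, ENNReal.ofReal (gg t s)) + ∫⁻ s in B, ENNReal.ofReal (gg t s) := by gcongr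
    _ = ∫⁻ s in M, ENNReal.ofReal (gg t s) := hsplitM.symm

lemma key_integral {t : ℝ} (ht : 0 < t) (ht1 : t < 1) :
    ∫⁻ s in Ioo 0 1, ENNReal.ofReal (gg t s * s ^ (-(1:ℝ)/2))
      ≤ ENNReal.ofReal (2 - Real.log t) := by
  have hsplit : Ioo (0:ℝ) 1 = Ioo 0 t ∪ Ico t 1 := (Ioo_union_Ico_eq_Ioo ht ht1.le).symm
  rw [hsplit]
  refine le_trans (lintegral_union_le _ _ _) ?_
  have hrpow_int : IntegrableOn (fun s : ℝ => s ^ (-(1:ℝ)/2)) (Ioo 0 t) := by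
    have h1 : IntervalIntegrable (fun s : ℝ => s ^ (-(1:ℝ)/2)) volume 0 t :=
      intervalIntegral.intervalIntegrable_rpow' (by norm_num)
    exact ((intervalIntegrable_iff_integrableOn_Ioc_of_le ht.le).mp h1).mono_set
      Ioo_subset_Ioc_self
  have hc : (0:ℝ) ≤ t ^ (-(1:ℝ)/2) := Real.rpow_nonneg ht.le _
  -- piece 1
  have hp1 : ∫⁻ s in Ioo 0 t, ENNReal.ofReal (gg t s * s ^ (-(1:ℝ)/2))
      ≤ ENNReal.ofReal 2 := by
    have hmono : ∫⁻ s in Ioo 0 t, ENNReal.ofReal (gg t s * s ^ (-(1:ℝ)/2))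
        ≤ ∫⁻ s in Ioo 0 t, ENNReal.ofReal (t ^ (-(1:ℝ)/2) * s ^ (-(1:ℝ)/2)) := by
      apply setLIntegral_mono (by apply Measurable.ennreal_ofReal; fun_prop)
      intro s hs
      apply ENNReal.ofReal_le_ofReal
      exact mul_le_mul_of_nonneg_right (min_le_left _ _) (Real.rpow_nonneg hs.1.le _)
    refine hmono.trans ?_
    have heq : ∫⁻ s in Ioo 0 t, ENNReal.ofReal (t ^ (-(1:ℝ)/2) * s ^ (-(1:ℝ)/2))
        = ENNReal.ofReal (∫ s in Ioo 0 t, t ^ (-(1:ℝ)/2) * s ^ (-(1:ℝ)/2)) := by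
      rw [ofReal_integral_eq_lintegral_ofReal (hrpow_int.const_mul _)]
      filter_upwards [ae_restrict_mem measurableSet_Ioo] with s hs
      exact mul_nonneg hc (Real.rpow_nonneg hs.1.le _)
    rw [heq]
    apply ENNReal.ofReal_le_ofReal
    have hval : ∫ s in Ioo 0 t, t ^ (-(1:ℝ)/2) * s ^ (-(1:ℝ)/2)
        = t ^ (-(1:ℝ)/2) * ∫ s in Ioo 0 t, s ^ (-(1:ℝ)/2) := by
      exact integral_const_mul _ _
    rw [hval]
    have hint : ∫ s in Ioo 0 t, s ^ (-(1:ℝ)/2) = 2 * t ^ ((1:ℝ)/2) := by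
      rw [← integral_Ioc_eq_integral_Ioo, ← intervalIntegral.integral_of_le ht.le]
      rw [integral_rpow (Or.inl (by norm_num))]
      rw [Real.zero_rpow (by norm_num)]
      norm_num
      ring
    rw [hint]
    have : t ^ (-(1:ℝ)/2) * t ^ ((1:ℝ)/2) = 1 := by
      rw [← Real.rpow_add ht]
      norm_num
    rw [show t ^ (-(1:ℝ)/2) * (2 * t ^ ((1:ℝ)/2)) = 2 * (t ^ (-(1:ℝ)/2) * t ^ ((1:ℝ)/2)) from by
      ring, this]
    norm_num
  -- piece 2
  have hp2 : ∫⁻ s in Ico t 1, ENNReal.ofReal (gg t s * s ^ (-(1:ℝ)/2))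
      ≤ ENNReal.ofReal (- Real.log t) := by
    have hinv_int : IntegrableOn (fun s : ℝ => s⁻¹) (Ico t 1) := by
      apply (ContinuousOn.integrableOn_Icc ?_).mono_set Ico_subset_Icc_self
      apply ContinuousOn.inv₀ continuousOn_id
      intro s hs
      exact ne_of_gt (lt_of_lt_of_le ht hs.1)
    have hmono : ∫⁻ s in Ico t 1, ENNReal.ofReal (gg t s * s ^ (-(1:ℝ)/2))
        ≤ ∫⁻ s in Ico t 1, ENNReal.ofReal s⁻¹ := by
      apply setLIntegral_mono (by apply Measurable.ennreal_ofReal; fun_prop)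
      intro s hs
      apply ENNReal.ofReal_le_ofReal
      have hs0 : 0 < s := lt_of_lt_of_le ht hs.1
      calc gg t s * s ^ (-(1:ℝ)/2) ≤ s ^ (-(1:ℝ)/2) * s ^ (-(1:ℝ)/2) :=
            mul_le_mul_of_nonneg_right (min_le_right _ _) (Real.rpow_nonneg hs0.le _)
        _ = s ^ (-(1:ℝ)) := by rw [← Real.rpow_add hs0]; norm_num
        _ = s⁻¹ := by rw [Real.rpow_neg_one]
    refine hmono.trans ?_
    have heq : ∫⁻ s in Ico t 1, ENNReal.ofReal s⁻¹
        = ENNReal.ofReal (∫ s in Ico t 1, s⁻¹) := by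
      rw [ofReal_integral_eq_lintegral_ofReal hinv_int]
      filter_upwards [ae_restrict_mem measurableSet_Ico] with s hs
      exact inv_nonneg.mpr (le_trans ht.le hs.1)
    rw [heq]
    apply ENNReal.ofReal_le_ofReal
    have h0 : (0:ℝ) ∉ uIcc t 1 := by
      rw [uIcc_of_le ht1.le]
      exact fun h => absurd h.1 (not_le.mpr ht)
    have : ∫ s in Ico t 1, (s:ℝ)⁻¹ = Real.log (1/t) := by
      rw [integral_Ico_eq_integral_Ioo, ← integral_Ioc_eq_integral_Ioo,
        ← intervalIntegral.integral_of_le ht1.le, integral_inv h0]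
    rw [this, one_div, Real.log_inv]
  calc (∫⁻ s in Ioo 0 t, ENNReal.ofReal (gg t s * s ^ (-(1:ℝ)/2)))
        + ∫⁻ s in Ico t 1, ENNReal.ofReal (gg t s * s ^ (-(1:ℝ)/2))
      ≤ ENNReal.ofReal 2 + ENNReal.ofReal (- Real.log t) := add_le_add hp1 hp2
    _ = ENNReal.ofReal (2 - Real.log t) := by
        rw [← ENNReal.ofReal_add (by norm_num) (by simpa using Real.log_nonpos ht.le ht1.le),
          sub_eq_add_neg]

lemma gg_real_meas (t : ℝ) : Measurable (gg t) := measurable_const.min (by fun_prop)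

lemma swap_bound {N t : ℝ} (hN : 0 < N) (ht : 0 < t) (ht1 : t < 1) :
    ∫⁻ l in Ioi (0:ℝ), ∫⁻ s in Ioo 0 (min 1 (N^2/l^2)), ENNReal.ofReal (gg t s)
      ≤ ENNReal.ofReal N * ∫⁻ s in Ioo 0 1, ENNReal.ofReal (gg t s * s ^ (-(1:ℝ)/2)) := by
  set S : Set (ℝ × ℝ) := {q | 0 < q.1 ∧ 0 < q.2 ∧ q.2 < min 1 (N^2/q.1^2)} with hSdef
  have hSmeas : MeasurableSet S := by
    apply MeasurableSet.inter
    · exact measurable_fst measurableSet_Ioi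
    apply MeasurableSet.inter
    · exact measurable_snd measurableSet_Ioi
    · apply measurableSet_lt measurable_snd
      apply Measurable.min measurable_const
      exact measurable_const.div ((measurable_fst.pow_const 2))
  set K : ℝ × ℝ → ℝ≥0∞ := fun q => S.indicator (fun q => ENNReal.ofReal (gg t q.2)) q with hKdef
  have hKmeas : Measurable K := ((gg_meas t).comp measurable_snd).indicator hSmeas
  -- step 1: LHS = iterated integral of K
  have step1 : ∫⁻ l in Ioi (0:ℝ), ∫⁻ s in Ioo 0 (min 1 (N^2/l^2)), ENNReal.ofReal (gg t s)
      = ∫⁻ l, ∫⁻ s, K (l, s) := by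
    rw [← lintegral_indicator measurableSet_Ioi]
    congr 1
    ext l
    rw [Set.indicator_apply]
    by_cases hl : l ∈ Ioi (0:ℝ)
    · rw [if_pos hl, ← lintegral_indicator measurableSet_Ioo]
      congr 1
      ext s
      simp only [Set.indicator_apply, hKdef, hSdef, mem_setOf_eq, mem_Ioo]
      by_cases hs : 0 < s ∧ s < min 1 (N^2/l^2)
      · rw [if_pos hs, if_pos ⟨hl, hs.1, hs.2⟩]
      · rw [if_neg hs, if_neg (by intro h; exact hs ⟨h.2.1, h.2.2⟩)]
    · rw [if_neg hl]
      have : ∀ s : ℝ, K (l, s) = 0 := by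
        intro s
        simp only [hKdef, Set.indicator_apply]
        rw [if_neg]
        intro h
        exact hl h.1
      simp [this]
  rw [step1, lintegral_lintegral_swap hKmeas.aemeasurable]
  -- step 2: inner integral in l
  have step2 : ∀ s : ℝ, ∫⁻ l, K (l, s)
      = (Ioo (0:ℝ) 1).indicator
          (fun s => ENNReal.ofReal (gg t s) * ENNReal.ofReal (N * s ^ (-(1:ℝ)/2))) s := by
    intro s
    by_cases hs : s ∈ Ioo (0:ℝ) 1
    · rw [Set.indicator_of_mem hs]
      have hs0 := hs.1
      set r : ℝ := s ^ ((1:ℝ)/2) with hrdef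
      have hr0 : 0 < r := Real.rpow_pos_of_pos hs0 _
      have hr2 : r^2 = s := by
        rw [hrdef, ← Real.rpow_natCast (s ^ ((1:ℝ)/2)) 2, ← Real.rpow_mul hs0.le]
        norm_num
      have hrinv : s ^ (-(1:ℝ)/2) = r⁻¹ := by
        rw [hrdef, ← Real.rpow_neg_one (s ^ ((1:ℝ)/2)), ← Real.rpow_mul hs0.le]
        norm_num
      have hset : {l : ℝ | (l, s) ∈ S} = Ioo 0 (N / r) := by
        ext l
        simp only [hSdef, mem_setOf_eq, mem_Ioo]
        constructor
        · rintro ⟨hl, -, hlt⟩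
          refine ⟨hl, ?_⟩
          have h2 : s < N^2/l^2 := lt_of_lt_of_le hlt (min_le_right _ _)
          have hl2 : 0 < l^2 := by positivity
          rw [lt_div_iff₀ hl2] at h2
          rw [lt_div_iff₀ hr0]
          nlinarith
        · rintro ⟨hl, hlt⟩
          refine ⟨hl, hs0, lt_min hs.2 ?_⟩
          rw [lt_div_iff₀ hr0] at hlt
          have hl2 : 0 < l^2 := by positivity
          rw [lt_div_iff₀ hl2]
          have hlr : 0 < l * r := mul_pos hl hr0
          nlinarith [mul_self_lt_mul_self hlr.le hlt]
      have : (fun l => K (l, s)) = fun l =>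
          (Ioo (0:ℝ) (N/r)).indicator (fun _ => ENNReal.ofReal (gg t s)) l := by
        funext l
        simp only [hKdef, Set.indicator_apply]
        by_cases hl : (l, s) ∈ S
        · rw [if_pos hl, if_pos (hset ▸ (show l ∈ {l : ℝ | (l,s) ∈ S} from hl))]
        · rw [if_neg hl, if_neg (fun hm => hl (by
            have : l ∈ {l : ℝ | (l,s) ∈ S} := hset ▸ hm
            exact this))]
      rw [this, lintegral_indicator measurableSet_Ioo]
      rw [setLIntegral_const, Real.volume_Ioo, sub_zero]
      congr 1
      rw [hrinv, div_eq_mul_inv]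
    · rw [Set.indicator_of_notMem hs]
      have : ∀ l : ℝ, K (l, s) = 0 := by
        intro l
        simp only [hKdef, Set.indicator_apply]
        rw [if_neg]
        intro h
        exact hs ⟨h.2.1, lt_of_lt_of_le h.2.2 (min_le_left _ _)⟩
      simp [this]
  refine le_of_eq ?_
  calc ∫⁻ s, ∫⁻ l, K (l, s)
      = ∫⁻ s, (Ioo (0:ℝ) 1).indicator
          (fun s => ENNReal.ofReal (gg t s) * ENNReal.ofReal (N * s ^ (-(1:ℝ)/2))) s := by
        exact lintegral_congr step2
    _ = ∫⁻ s in Ioo (0:ℝ) 1, ENNReal.ofReal (gg t s) * ENNReal.ofReal (N * s ^ (-(1:ℝ)/2)) := by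
        rw [lintegral_indicator measurableSet_Ioo]
    _ = ∫⁻ s in Ioo (0:ℝ) 1, ENNReal.ofReal N * ENNReal.ofReal (gg t s * s ^ (-(1:ℝ)/2)) := by
        apply setLIntegral_congr_fun measurableSet_Ioo
        intro s hs
        have h1 : 0 ≤ gg t s := le_min (Real.rpow_nonneg ht.le _) (Real.rpow_nonneg hs.1.le _)
        beta_reduce
        rw [← ENNReal.ofReal_mul h1, ← ENNReal.ofReal_mul hN.le]
        congr 1
        ring
    _ = ENNReal.ofReal N * ∫⁻ s in Ioo (0:ℝ) 1, ENNReal.ofReal (gg t s * s ^ (-(1:ℝ)/2)) := by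
        rw [lintegral_const_mul _ (f := fun s => ENNReal.ofReal (gg t s * s ^ (-(1:ℝ)/2))) (((gg_real_meas t).mul (by fun_prop)).ennreal_ofReal)]

lemma main_bound (x : ℝ → ℝ) (hx : Measurable x)
    (hbdd : BddAbove {r : ℝ | ∃ t > (0:ℝ), r = Real.sqrt t * mu x t})
    (hN : 0 < norm2inf x) {t : ℝ} (ht : 0 < t) (ht1 : t < 1) :
    ∫⁻ u, ENNReal.ofReal (gg t u) * ENNReal.ofReal |x u| ∂nu
      ≤ ENNReal.ofReal (norm2inf x * (2 - Real.log t)) := by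
  set N := norm2inf x with hNdef
  set Gt : ℝ → ℝ≥0∞ := fun u => ENNReal.ofReal (gg t u) with hGtdef
  have hGt : Measurable Gt := gg_meas t
  have habs : Measurable fun u : ℝ => ENNReal.ofReal |x u| := hx.abs.ennreal_ofReal
  have stepA : ∫⁻ u, Gt u * ENNReal.ofReal |x u| ∂nu
      = ∫⁻ u, ENNReal.ofReal |x u| ∂(nu.withDensity Gt) := by
    rw [lintegral_withDensity_eq_lintegral_mul nu hGt habs]
    rfl
  have stepB : ∫⁻ u, ENNReal.ofReal |x u| ∂(nu.withDensity Gt)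
      = ∫⁻ l in Ioi (0:ℝ), (nu.withDensity Gt) {u | l < |x u|} :=
    lintegral_eq_lintegral_meas_lt (nu.withDensity Gt)
      (Filter.Eventually.of_forall fun u => abs_nonneg _) hx.abs.aemeasurable
  have stepC : ∀ l : ℝ, 0 < l → (nu.withDensity Gt) {u | l < |x u|}
      ≤ ∫⁻ s in Ioo 0 (min 1 (N^2/l^2)), Gt s := by
    intro l hl
    have hA : MeasurableSet {u : ℝ | l < |x u|} := measurableSet_lt measurable_const hx.abs
    rw [withDensity_apply _ hA]
    have hres : nu.restrict {u : ℝ | l < |x u|}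
        = volume.restrict ({u : ℝ | l < |x u|} ∩ Ioo 0 1) := by
      rw [nu, Measure.restrict_restrict hA]
    rw [nu] at hres ⊢
    rw [Measure.restrict_restrict hA]
    apply bathtub t (hA.inter measurableSet_Ioo) inter_subset_right
      (lt_min one_pos (by positivity))
    have hvol : volume ({u : ℝ | l < |x u|} ∩ Ioo 0 1) = nu {u : ℝ | l < |x u|} := by
      rw [nu, Measure.restrict_apply hA]
    rw [hvol]
    rcases min_cases 1 (N^2/l^2) with ⟨hm, _⟩ | ⟨hm, _⟩ <;> rw [hm]
    · rw [ENNReal.ofReal_one]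
      exact le_trans (measure_mono (subset_univ _)) nu_fin
    · exact tail_bound_pos x hx hbdd hN hl
  calc ∫⁻ u, Gt u * ENNReal.ofReal |x u| ∂nu
      = ∫⁻ l in Ioi (0:ℝ), (nu.withDensity Gt) {u | l < |x u|} := stepA.trans stepB
    _ ≤ ∫⁻ l in Ioi (0:ℝ), ∫⁻ s in Ioo 0 (min 1 (N^2/l^2)), Gt s := by
        apply lintegral_mono_ae
        filter_upwards [ae_restrict_mem measurableSet_Ioi] with l hl
        exact stepC l hl
    _ ≤ ENNReal.ofReal N * ∫⁻ s in Ioo 0 1, ENNReal.ofReal (gg t s * s ^ (-(1:ℝ)/2)) :=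
        swap_bound hN ht ht1
    _ ≤ ENNReal.ofReal N * ENNReal.ofReal (2 - Real.log t) := by
        gcongr
        exact key_integral ht ht1
    _ = ENNReal.ofReal (N * (2 - Real.log t)) := (ENNReal.ofReal_mul hN.le).symm

/-- For `x ∈ L_{2,∞}(0,1)`, `|(Tx)(t)| ≤ ‖x‖_{2,∞} · log(e²/t)` for all `t ∈ (0,1)`. -/
theorem stmt2 (x : ℝ → ℝ) (hx : Measurable x)
    (hbdd : BddAbove {r : ℝ | ∃ t > (0:ℝ), r = Real.sqrt t * mu x t}) :
    ∀ t ∈ Set.Ioo (0:ℝ) 1,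
      |T x t| ≤ norm2inf x * Real.log (Real.exp 1 ^ 2 / t) := by
  intro t htm
  obtain ⟨ht0, ht1⟩ := htm
  have hlog : Real.log (Real.exp 1 ^ 2 / t) = 2 - Real.log t := by
    rw [Real.log_div (by positivity) (ne_of_gt ht0), Real.log_pow, Real.log_exp]
    norm_num
  rw [hlog]
  have hNnn := norm2inf_nonneg x hbdd
  have hIoc_sub : Ioc (0:ℝ) t ⊆ Ioo 0 1 := fun s hs => ⟨hs.1, lt_of_le_of_lt hs.2 ht1⟩
  rcases eq_or_lt_of_le hNnn with hN0 | hNpos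
  · -- zero case
    have hnull : nu {u | 0 < |x u|} = 0 := tail_bound_zero x hx hbdd hN0.symm
    have hnull' : volume ({u : ℝ | x u ≠ 0} ∩ Ioo 0 1) = 0 := by
      have hseteq : {u : ℝ | x u ≠ 0} ∩ Ioo 0 1 = {u : ℝ | (0:ℝ) < |x u|} ∩ Ioo 0 1 := by
        ext u; simp [abs_pos, sub_ne_zero]
      rw [hseteq, ← Measure.restrict_apply (μ := volume) (s := Ioo (0:ℝ) 1)
        (measurableSet_lt measurable_const hx.abs : MeasurableSet {u : ℝ | (0:ℝ) < |x u|})]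
      exact hnull
    have h1 : (∫ s in Ioc (0:ℝ) t, x s) = 0 := by
      apply integral_eq_zero_of_ae
      rw [Filter.EventuallyEq, ae_iff]
      have hms : MeasurableSet {a : ℝ | ¬ x a = (0:ℝ → ℝ) a} := by
        simp only [Pi.zero_apply]
        exact (hx (measurableSet_singleton 0)).compl
      rw [Measure.restrict_apply hms]
      apply measure_mono_null ?_ hnull'
      intro u hu
      exact ⟨by simpa using hu.1, hIoc_sub hu.2⟩
    have h2 : (∫ s in Ioc t (1:ℝ), x s * s ^ (-(1:ℝ)/2)) = 0 := by
      apply integral_eq_zero_of_ae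
      rw [Filter.EventuallyEq, ae_iff]
      have hms : MeasurableSet {a : ℝ | ¬ x a * a ^ (-(1:ℝ)/2) = (0:ℝ → ℝ) a} := by
        simp only [Pi.zero_apply]
        exact ((hx.mul (by fun_prop)) (measurableSet_singleton 0)).compl
      rw [Measure.restrict_apply hms]
      apply measure_mono_null (t := ({u : ℝ | x u ≠ 0} ∩ Ioo 0 1) ∪ {(1:ℝ)}) ?_
        (measure_union_null hnull' Real.volume_singleton)
      intro u hu
      have hxu : x u ≠ 0 := by
        intro h
        apply hu.1
        simp [h]
      rcases eq_or_lt_of_le hu.2.2 with he | hlt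
      · right; simp [he]
      · left; exact ⟨hxu, lt_trans ht0 hu.2.1, hlt⟩
    have hT0 : T x t = 0 := by
      simp only [T]
      rw [h1, h2]; ring
    rw [hT0, abs_zero, ← hN0, zero_mul]
  · -- positive case
    set N := norm2inf x with hNdef
    set c : ℝ := t ^ (-(1:ℝ)/2) with hcdef
    have hc0 : 0 < c := Real.rpow_pos_of_pos ht0 _
    set I : ℝ≥0∞ := ∫⁻ u, ENNReal.ofReal (gg t u) * ENNReal.ofReal |x u| ∂nu with hIdef
    have hIle : I ≤ ENNReal.ofReal (N * (2 - Real.log t)) :=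
      main_bound x hx hbdd hNpos ht0 ht1
    have hIfin : I ≠ ⊤ := (lt_of_le_of_lt hIle ENNReal.ofReal_lt_top).ne
    -- I as a lintegral of the product
    have hgg_nonneg : ∀ s : ℝ, s ∈ Ioo (0:ℝ) 1 → 0 ≤ gg t s := fun s hs =>
      le_min (Real.rpow_nonneg ht0.le _) (Real.rpow_nonneg hs.1.le _)
    have hIeq : I = ∫⁻ u, ENNReal.ofReal (gg t u * |x u|) ∂nu := by
      rw [hIdef]
      apply lintegral_congr_ae
      rw [nu]
      filter_upwards [ae_restrict_mem measurableSet_Ioo] with u hu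
      rw [ENNReal.ofReal_mul (hgg_nonneg u hu)]
    -- integrability of x on (0,1)
    have hxlint : ∫⁻ u, ENNReal.ofReal |x u| ∂nu < ⊤ := by
      have hb : ∫⁻ u, ENNReal.ofReal |x u| ∂nu ≤ I := by
        rw [hIdef]
        apply lintegral_mono_ae
        rw [nu]
        filter_upwards [ae_restrict_mem measurableSet_Ioo] with u hu
        have h1le : (1:ℝ) ≤ gg t u := by
          apply le_min
          · have := Real.rpow_le_rpow_of_nonpos ht0 ht1.le
              (show -(1:ℝ)/2 ≤ 0 by norm_num)
            simpa using this
          · have := Real.rpow_le_rpow_of_nonpos hu.1 hu.2.le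
              (show -(1:ℝ)/2 ≤ 0 by norm_num)
            simpa using this
        calc ENNReal.ofReal |x u| = 1 * ENNReal.ofReal |x u| := (one_mul _).symm
          _ ≤ ENNReal.ofReal (gg t u) * ENNReal.ofReal |x u| := by
              gcongr
              calc (1:ℝ≥0∞) = ENNReal.ofReal 1 := ENNReal.ofReal_one.symm
                _ ≤ ENNReal.ofReal (gg t u) := ENNReal.ofReal_le_ofReal h1le
      exact lt_of_le_of_lt hb (lt_of_le_of_lt hIle ENNReal.ofReal_lt_top)
    have hx_int : IntegrableOn x (Ioo 0 1) volume := by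
      constructor
      · exact hx.aestronglyMeasurable
      · rw [hasFiniteIntegral_iff_norm]
        simpa [Real.norm_eq_abs, nu] using hxlint
    have hx_int_Ioc : IntegrableOn x (Ioc 0 t) volume := hx_int.mono_set hIoc_sub
    have hxr_meas : AEStronglyMeasurable (fun s : ℝ => x s * s ^ (-(1:ℝ)/2))
        (volume.restrict (Ioo t 1)) := ((hx.mul (by fun_prop)).aestronglyMeasurable)
    have hxr_int : IntegrableOn (fun s : ℝ => x s * s ^ (-(1:ℝ)/2)) (Ioo t 1) volume := by
      apply Integrable.mono ((hx_int.mono_set (Ioo_subset_Ioo ht0.le le_rfl)).abs.const_mul c)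
        hxr_meas
      filter_upwards [ae_restrict_mem measurableSet_Ioo] with s hs
      rw [Real.norm_eq_abs, Real.norm_eq_abs, abs_mul, abs_mul, abs_abs,
        abs_of_nonneg (Real.rpow_nonneg (lt_trans ht0 hs.1).le _), abs_of_nonneg hc0.le]
      rw [mul_comm c _]
      apply mul_le_mul_of_nonneg_left _ (abs_nonneg _)
      exact Real.rpow_le_rpow_of_nonpos ht0 hs.1.le (by norm_num)
    -- bound |T|
    have hT1 : |c * ∫ s in Ioc (0:ℝ) t, x s| ≤ ∫ s in Ioc (0:ℝ) t, gg t s * |x s| := by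
      rw [abs_mul, abs_of_nonneg hc0.le]
      have : |∫ s in Ioc (0:ℝ) t, x s| ≤ ∫ s in Ioc (0:ℝ) t, |x s| := by
        simpa [Real.norm_eq_abs] using
          norm_integral_le_integral_norm (μ := volume.restrict (Ioc (0:ℝ) t)) x
      calc c * |∫ s in Ioc (0:ℝ) t, x s| ≤ c * ∫ s in Ioc (0:ℝ) t, |x s| := by
            exact mul_le_mul_of_nonneg_left this hc0.le
        _ = ∫ s in Ioc (0:ℝ) t, c * |x s| := (integral_const_mul c _).symm
        _ = ∫ s in Ioc (0:ℝ) t, gg t s * |x s| := by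
            apply setIntegral_congr_fun measurableSet_Ioc
            intro s hs
            have hge : gg t s = c := min_eq_left
              (Real.rpow_le_rpow_of_nonpos hs.1 hs.2 (by norm_num))
            show c * |x s| = gg t s * |x s|
            rw [hge]
    have hT2 : |∫ s in Ioc t (1:ℝ), x s * s ^ (-(1:ℝ)/2)|
        ≤ ∫ s in Ioo t (1:ℝ), gg t s * |x s| := by
      rw [integral_Ioc_eq_integral_Ioo]
      have h1 : |∫ s in Ioo t (1:ℝ), x s * s ^ (-(1:ℝ)/2)|
          ≤ ∫ s in Ioo t (1:ℝ), |x s| * |s ^ (-(1:ℝ)/2)| := by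
        simpa [Real.norm_eq_abs, abs_mul] using
          norm_integral_le_integral_norm (μ := volume.restrict (Ioo t (1:ℝ)))
            (fun s => x s * s ^ (-(1:ℝ)/2))
      refine h1.trans (le_of_eq ?_)
      apply setIntegral_congr_fun measurableSet_Ioo
      intro s hs
      have hs0 : 0 < s := lt_trans ht0 hs.1
      have hge : gg t s = s ^ (-(1:ℝ)/2) := min_eq_right
        (Real.rpow_le_rpow_of_nonpos ht0 hs.1.le (by norm_num))
      show |x s| * |s ^ (-(1:ℝ)/2)| = gg t s * |x s|
      rw [abs_of_nonneg (Real.rpow_nonneg hs0.le _), hge]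
      ring
    -- integrability of gg * |x| on pieces
    have hggx_int : IntegrableOn (fun s => gg t s * |x s|) (Ioo 0 1) volume := by
      apply Integrable.mono (hx_int.abs.const_mul c)
        (show AEStronglyMeasurable (fun s => gg t s * |x s|) _ from ((gg_real_meas t).mul hx.abs).aestronglyMeasurable)
      filter_upwards [ae_restrict_mem measurableSet_Ioo] with s hs
      rw [Real.norm_eq_abs, Real.norm_eq_abs, abs_mul, abs_mul, abs_abs,
        abs_of_nonneg (hgg_nonneg s hs), abs_of_nonneg hc0.le]
      exact mul_le_mul_of_nonneg_right (min_le_left _ _) (abs_nonneg _)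
    have hsplit : Ioc (0:ℝ) t ∪ Ioo t 1 = Ioo (0:ℝ) 1 := Ioc_union_Ioo_eq_Ioo ht0.le ht1
    have hsum : (∫ s in Ioc (0:ℝ) t, gg t s * |x s|) + ∫ s in Ioo t (1:ℝ), gg t s * |x s|
        = ∫ s in Ioo (0:ℝ) 1, gg t s * |x s| := by
      rw [← setIntegral_union (by
          rw [Set.disjoint_left]
          rintro a ⟨_, h2⟩ ⟨h3, _⟩
          linarith) measurableSet_Ioo
        (hggx_int.mono_set hIoc_sub)
        (hggx_int.mono_set (Ioo_subset_Ioo ht0.le le_rfl)), hsplit]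
    -- the real integral equals I.toReal
    have hreal : ∫ s in Ioo (0:ℝ) 1, gg t s * |x s| = I.toReal := by
      rw [hIeq]
      rw [show (∫ s in Ioo (0:ℝ) 1, gg t s * |x s|) = ∫ s, gg t s * |x s| ∂nu from rfl]
      rw [integral_eq_lintegral_of_nonneg_ae ?_ (show AEStronglyMeasurable (fun s => gg t s * |x s|) nu from ((gg_real_meas t).mul hx.abs).aestronglyMeasurable)]
      rw [nu]
      filter_upwards [ae_restrict_mem measurableSet_Ioo] with s hs
      exact mul_nonneg (hgg_nonneg s hs) (abs_nonneg _)
    have hfinal : |T x t| ≤ I.toReal := by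
      simp only [T]
      rw [← hcdef]
      calc |c * (∫ s in Ioc (0:ℝ) t, x s) + ∫ s in Ioc t (1:ℝ), x s * s ^ (-(1:ℝ)/2)|
          ≤ |c * ∫ s in Ioc (0:ℝ) t, x s| + |∫ s in Ioc t (1:ℝ), x s * s ^ (-(1:ℝ)/2)| :=
            abs_add_le _ _
        _ ≤ (∫ s in Ioc (0:ℝ) t, gg t s * |x s|) + ∫ s in Ioo t (1:ℝ), gg t s * |x s| :=
            add_le_add hT1 hT2
        _ = I.toReal := by rw [hsum, hreal]
    refine hfinal.trans ?_
    calc I.toReal ≤ (ENNReal.ofReal (N * (2 - Real.log t))).toReal :=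
          ENNReal.toReal_mono ENNReal.ofReal_ne_top hIle
      _ = N * (2 - Real.log t) := ENNReal.toReal_ofReal (by
          have : Real.log t ≤ 0 := Real.log_nonpos ht0.le ht1.le
          nlinarith)
end

section
/- Let ψ(t) = 1/log(e/t) on (0,1). Let y ∈ L_2((0,1), dt/t) be positive and increasing, and set x(t) = t^{-1/2} y(t). Then for all t ∈ (0,1), ψ(t)·(Tx)(t) ≥ (1/(4e))·y(t/2), where (Tx)(t) = t^{-1/2}∫_0^t x(s)ds + ∫_t^1 x(s)s^{-1/2}ds. -/
open MeasureTheory Set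

/-- `ψ(t) = 1/log(e/t)`. -/
noncomputable def psi (t : ℝ) : ℝ := 1 / Real.log (Real.exp 1 / t)

/-- If `y ∈ L_2((0,1), dt/t)` is positive and increasing and `x(t) = t^{-1/2} y(t)`,
then `ψ(t)·(Tx)(t) ≥ (1/(4e)) y(t/2)` for all `t ∈ (0,1)`. -/
theorem stmt12 (y : ℝ → ℝ) (hpos : ∀ t ∈ Set.Ioo (0:ℝ) 1, 0 < y t)
    (hmono : MonotoneOn y (Set.Ioo 0 1))
    (hL2 : IntegrableOn (fun t => y t ^ 2 / t) (Set.Ioo 0 1)) :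
    ∀ t ∈ Set.Ioo (0:ℝ) 1,
      (1 / (4 * Real.exp 1)) * y (t / 2)
        ≤ psi t * T (fun s => s ^ (-(1:ℝ)/2) * y s) t := by
  intro t ht
  obtain ⟨ht0, ht1⟩ := ht
  set x : ℝ → ℝ := fun s => s ^ (-(1:ℝ)/2) * y s with hxdef
  have hrm : Measurable fun s : ℝ => s ^ (-(1:ℝ)/2) := by fun_prop
  -- measurability of y
  have hymeas : AEStronglyMeasurable y (volume.restrict (Ioo (0:ℝ) 1)) := by
    have h1 : AEStronglyMeasurable (fun s => Real.sqrt ((y s ^ 2 / s) * s))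
        (volume.restrict (Ioo (0:ℝ) 1)) :=
      Real.continuous_sqrt.comp_aestronglyMeasurable
        (hL2.aestronglyMeasurable.mul aestronglyMeasurable_id)
    apply h1.congr
    filter_upwards [ae_restrict_mem measurableSet_Ioo] with s hs
    rw [div_mul_cancel₀ _ (ne_of_gt hs.1), Real.sqrt_sq (hpos s hs).le]
  have hxmeas : AEStronglyMeasurable x (volume.restrict (Ioo (0:ℝ) 1)) :=
    (hrm.aestronglyMeasurable.restrict).mul hymeas
  have sub1 : Ioc (0:ℝ) t ⊆ Ioo (0:ℝ) 1 := fun s hs => ⟨hs.1, lt_of_le_of_lt hs.2 ht1⟩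
  have hxmeas1 : AEStronglyMeasurable x (volume.restrict (Ioc (0:ℝ) t)) :=
    hxmeas.mono_measure (Measure.restrict_mono sub1 le_rfl)
  -- integrability of x on Ioc 0 t
  have hx2 : IntegrableOn (fun s => x s ^ 2) (Ioc 0 t) := by
    apply (hL2.mono_set sub1).congr
    filter_upwards [ae_restrict_mem measurableSet_Ioc] with s hs
    have hs0 : (0:ℝ) < s := hs.1
    have hsq : (s ^ (-(1:ℝ)/2)) ^ 2 = s⁻¹ := by
      rw [← Real.rpow_natCast (s ^ (-(1:ℝ)/2)) 2, ← Real.rpow_mul hs0.le]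
      norm_num [Real.rpow_neg_one]
    simp only [hxdef, mul_pow, hsq]
    field_simp
  have hIntx : IntegrableOn x (Ioc 0 t) :=
    ((memLp_two_iff_integrable_sq hxmeas1).mpr hx2).integrable one_le_two
  -- nonnegativity
  have hx_nonneg : ∀ s ∈ Ioc (0:ℝ) t, 0 ≤ x s := fun s hs =>
    mul_nonneg (Real.rpow_nonneg hs.1.le _) (hpos s (sub1 hs)).le
  have hA_nonneg : 0 ≤ ∫ s in Ioc (0:ℝ) t, x s := setIntegral_nonneg measurableSet_Ioc hx_nonneg
  have sub3 : Ioo t (1:ℝ) ⊆ Ioo (0:ℝ) 1 := fun s hs => ⟨lt_trans ht0 hs.1, hs.2⟩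
  have hBOoo : (∫ s in Ioc t (1:ℝ), x s * s ^ (-(1:ℝ)/2))
      = ∫ s in Ioo t (1:ℝ), x s * s ^ (-(1:ℝ)/2) := integral_Ioc_eq_integral_Ioo
  have hB_nonneg : 0 ≤ ∫ s in Ioc t (1:ℝ), x s * s ^ (-(1:ℝ)/2) := by
    rw [hBOoo]
    refine setIntegral_nonneg measurableSet_Ioo fun s hs => ?_
    exact mul_nonneg (mul_nonneg (Real.rpow_nonneg (lt_trans ht0 hs.1).le _)
      (hpos s (sub3 hs)).le) (Real.rpow_nonneg (lt_trans ht0 hs.1).le _)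
  -- psi
  have hlt : Real.log t < 0 := Real.log_neg ht0 ht1
  have hden : (0:ℝ) < 1 - Real.log t := by linarith
  have hpsi : psi t = 1 / (1 - Real.log t) := by
    rw [psi, Real.log_div (Real.exp_ne_zero 1) (ne_of_gt ht0), Real.log_exp]
  have hpsi_pos : 0 < psi t := by rw [hpsi]; positivity
  have ht2 : t / 2 ∈ Ioo (0:ℝ) 1 := ⟨by linarith, by linarith⟩
  have hyt2 : 0 < y (t/2) := hpos _ ht2
  have hT_nonneg : 0 ≤ T x t := by
    rw [T]
    have : (0:ℝ) ≤ t ^ (-(1:ℝ)/2) := Real.rpow_nonneg ht0.le _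
    positivity
  have hexp : (2:ℝ) < Real.exp 1 := by
    have := Real.exp_one_gt_d9; linarith
  have hfinal : ∀ z : ℝ, 0 < z → y (t/2) ≤ z → 1 / (4 * Real.exp 1) * y (t/2) ≤ (1/2) * z := by
    intro z hz hyz
    have h1 : 1 / (4 * Real.exp 1) * y (t/2) ≤ (1/2) * y (t/2) := by
      apply mul_le_mul_of_nonneg_right _ hyt2.le
      rw [div_le_div_iff₀ (by positivity) (by norm_num)]
      linarith
    exact h1.trans (mul_le_mul_of_nonneg_left hyz (by norm_num))
  rcases le_or_gt (Real.exp (-1)) t with hcase | hcase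
  · -- t ≥ e⁻¹ : use the first term
    have hlogge : (-1:ℝ) ≤ Real.log t := by
      rw [← Real.log_exp (-1)]
      exact Real.log_le_log (Real.exp_pos _) hcase
    have hψ : (1:ℝ)/2 ≤ psi t := by
      rw [hpsi]
      apply one_div_le_one_div_of_le hden
      linarith
    have sub2 : Ioc (t/2) t ⊆ Ioc (0:ℝ) t := fun s hs => ⟨lt_trans (by linarith) hs.1, hs.2⟩
    have step1 : (∫ s in Ioc (t/2) t, x s) ≤ ∫ s in Ioc (0:ℝ) t, x s := by
      apply setIntegral_mono_set hIntx
      · filter_upwards [ae_restrict_mem measurableSet_Ioc] with s hs using hx_nonneg s hs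
      · exact HasSubset.Subset.eventuallyLE sub2
    have step2 : (t ^ (-(1:ℝ)/2) * y (t/2)) * (t/2) ≤ ∫ s in Ioc (t/2) t, x s := by
      have hconst : (∫ _ in Ioc (t/2) t, (t ^ (-(1:ℝ)/2) * y (t/2)))
          = (t ^ (-(1:ℝ)/2) * y (t/2)) * (t/2) := by
        rw [setIntegral_const, Real.volume_real_Ioc_of_le (by linarith), smul_eq_mul]
        ring
      rw [← hconst]
      apply setIntegral_mono_on ((integrableOn_const_iff (C := t ^ (-(1:ℝ)/2) * y (t/2)) enorm_ne_top).mpr (Or.inr (by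
        rw [Real.volume_Ioc]; exact ENNReal.ofReal_lt_top))) (hIntx.mono_set sub2)
        measurableSet_Ioc
      intro s hs
      have hs0 : (0:ℝ) < s := lt_trans (by linarith) hs.1
      have h1 : t ^ (-(1:ℝ)/2) ≤ s ^ (-(1:ℝ)/2) :=
        Real.rpow_le_rpow_of_nonpos hs0 hs.2 (by norm_num)
      have h2 : y (t/2) ≤ y s := hmono ht2 ⟨hs0, lt_of_le_of_lt hs.2 ht1⟩ hs.1.le
      exact mul_le_mul h1 h2 hyt2.le (Real.rpow_nonneg hs0.le _)
    have hrpow2 : t ^ (-(1:ℝ)/2) * t ^ (-(1:ℝ)/2) = t⁻¹ := by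
      rw [← Real.rpow_add ht0]
      norm_num [Real.rpow_neg_one]
    have hA2 : (1/2) * y (t/2) ≤ t ^ (-(1:ℝ)/2) * ∫ s in Ioc (0:ℝ) t, x s := by
      have h3 : (t ^ (-(1:ℝ)/2) * y (t/2)) * (t/2) ≤ ∫ s in Ioc (0:ℝ) t, x s :=
        step2.trans step1
      have h4 := mul_le_mul_of_nonneg_left h3 (Real.rpow_nonneg ht0.le (-(1:ℝ)/2))
      calc (1/2) * y (t/2)
          = (t ^ (-(1:ℝ)/2) * t ^ (-(1:ℝ)/2)) * y (t/2) * (t/2) := by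
            rw [hrpow2]; field_simp
        _ = t ^ (-(1:ℝ)/2) * ((t ^ (-(1:ℝ)/2) * y (t/2)) * (t/2)) := by ring
        _ ≤ _ := h4
    have hTlb : (1/2) * y (t/2) ≤ T x t := by
      rw [T]
      have := hA2.trans (le_add_of_nonneg_right hB_nonneg)
      exact this
    calc 1 / (4 * Real.exp 1) * y (t/2) ≤ (1/2) * ((1/2) * y (t/2)) := by
          rw [show (1/2:ℝ) * ((1/2) * y (t/2)) = (1/4) * y (t/2) by ring]
          apply mul_le_mul_of_nonneg_right _ hyt2.le
          rw [div_le_div_iff₀ (by positivity) (by norm_num)]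
          nlinarith
      _ ≤ psi t * T x t := by
          apply mul_le_mul hψ hTlb (by positivity) hpsi_pos.le
  · -- t < e⁻¹ : use the second term
    have hlogt : Real.log t < -1 := by
      rw [← Real.log_exp (-1)]
      exact Real.log_lt_log ht0 hcase
    have hyt : 0 < y t := hpos t ⟨ht0, ht1⟩
    have hxmeas3 : AEStronglyMeasurable (fun s => x s * s ^ (-(1:ℝ)/2))
        (volume.restrict (Ioo t 1)) :=
      (hxmeas.mono_measure (Measure.restrict_mono sub3 le_rfl)).mul
        hrm.aestronglyMeasurable.restrict
    have heq : ∀ s ∈ Ioo t (1:ℝ), x s * s ^ (-(1:ℝ)/2) = y s * s⁻¹ := by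
      intro s hs
      have hs0 : (0:ℝ) < s := lt_trans ht0 hs.1
      have : s ^ (-(1:ℝ)/2) * s ^ (-(1:ℝ)/2) = s⁻¹ := by
        rw [← Real.rpow_add hs0]; norm_num [Real.rpow_neg_one]
      calc x s * s ^ (-(1:ℝ)/2) = y s * (s ^ (-(1:ℝ)/2) * s ^ (-(1:ℝ)/2)) := by
            simp only [hxdef]; ring
        _ = y s * s⁻¹ := by rw [this]
    -- integrability of the second integrand on Ioo t 1
    have hg_int : IntegrableOn (fun s => x s * s ^ (-(1:ℝ)/2)) (Ioo t 1) := by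
      apply Integrable.mono' (((hL2.mono_set sub3)).const_mul (y t)⁻¹) hxmeas3
      filter_upwards [ae_restrict_mem measurableSet_Ioo] with s hs
      have hs0 : (0:ℝ) < s := lt_trans ht0 hs.1
      have hys : y t ≤ y s := hmono ⟨ht0, ht1⟩ (sub3 hs) hs.1.le
      rw [heq s hs, Real.norm_of_nonneg (mul_nonneg (hpos s (sub3 hs)).le (by positivity))]
      rw [div_eq_mul_inv, ← mul_assoc]
      apply mul_le_mul_of_nonneg_right _ (inv_nonneg.2 hs0.le)
      rw [inv_mul_eq_div, le_div_iff₀ hyt]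
      nlinarith
    have hinv_int : IntegrableOn (fun s => y t * s⁻¹) (Ioo t 1) := by
      apply Integrable.const_mul
      apply (ContinuousOn.integrableOn_Icc ?_).mono_set Ioo_subset_Icc_self
      exact continuousOn_id.inv₀ fun s hs => ne_of_gt (lt_of_lt_of_le ht0 hs.1)
    have step3 : (∫ s in Ioo t (1:ℝ), y t * s⁻¹) ≤ ∫ s in Ioo t (1:ℝ), x s * s ^ (-(1:ℝ)/2) := by
      apply setIntegral_mono_on hinv_int hg_int measurableSet_Ioo
      intro s hs
      have hs0 : (0:ℝ) < s := lt_trans ht0 hs.1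
      rw [heq s hs]
      exact mul_le_mul_of_nonneg_right (hmono ⟨ht0, ht1⟩ (sub3 hs) hs.1.le) (inv_nonneg.2 hs0.le)
    have hcalc : (∫ s in Ioo t (1:ℝ), y t * s⁻¹) = y t * (- Real.log t) := by
      rw [MeasureTheory.integral_const_mul]
      congr 1
      rw [← integral_Ioc_eq_integral_Ioo, ← intervalIntegral.integral_of_le ht1.le,
        integral_inv (by
          rw [Set.uIcc_of_le ht1.le]
          intro h
          exact absurd h.1 (by linarith)), one_div, Real.log_inv]
    have hBlb : y t * (- Real.log t) ≤ ∫ s in Ioc t (1:ℝ), x s * s ^ (-(1:ℝ)/2) := by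
      rw [hBOoo, ← hcalc]; exact step3
    have hTlb : y t * (- Real.log t) ≤ T x t := by
      rw [T]
      refine le_trans ?_ (add_le_add_left le_rfl _)
      have h5 : 0 ≤ t ^ (-(1:ℝ)/2) * ∫ s in Ioc (0:ℝ) t, x s :=
        mul_nonneg (Real.rpow_nonneg ht0.le _) hA_nonneg
      linarith [hBlb]
    have hkey : (1/2) * y t ≤ psi t * (y t * (- Real.log t)) := by
      rw [hpsi, show (1:ℝ)/(1-Real.log t) * (y t * -Real.log t)
        = (y t * -Real.log t)/(1-Real.log t) by ring, le_div_iff₀ hden]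
      nlinarith
    have hmain : (1/2) * y t ≤ psi t * T x t :=
      hkey.trans (mul_le_mul_of_nonneg_left hTlb hpsi_pos.le)
    exact le_trans (hfinal (y t) hyt (hmono ht2 ⟨ht0, ht1⟩ (by linarith))) hmain
end

section
/- Let N be an Orlicz function (convex, increasing, N(0)=0) such that the Orlicz space L_N(0,1) embeds continuously into the Marcinkiewicz space M_ψ(0,1), where ψ(t) = 1/log(e/t) extended by ψ(t) = t for t ≥ 1. Then there exist constants c, c' > 0 such that N(v) ≥ c·v·log(e + v) for all v > c'; consequently L_N(0,1) ⊂ L_M(0,1) where M(t) = t·log(e + t). -/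
open MeasureTheory Set

/-- The Marcinkiewicz norm `‖f‖_{M_ψ} = sup_{0<t≤1} (1/ψ(t)) ∫_0^t μ(s,f) ds` on `(0,1)`. -/
noncomputable def MpsiNorm (f : ℝ → ℝ) : ℝ :=
  sSup {r : ℝ | ∃ t ∈ Set.Ioc (0:ℝ) 1, r = (∫ s in Set.Ioc (0:ℝ) t, mu f s) / psi t}

/-- Membership in the Orlicz space `L_N(0,1)`. -/
def MemOrlicz (N : ℝ → ℝ) (f : ℝ → ℝ) : Prop :=
  ∃ lam > (0:ℝ), IntegrableOn (fun u => N (|f u| / lam)) (Set.Ioo 0 1)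

lemma mu_ind (v t : ℝ) (hv : 0 < v) (ht : 0 < t) (ht1 : t ≤ 1) (s : ℝ) :
    mu ((Set.Ioo 0 t).indicator (fun _ => v)) s = if s < t then v else 0 := by
  have habs : ∀ u, |((Set.Ioo 0 t).indicator (fun _ => v)) u|
      = (Set.Ioo 0 t).indicator (fun _ => v) u := fun u =>
    abs_of_nonneg (Set.indicator_nonneg (fun _ _ => hv.le) u)
  have hset : ∀ a : ℝ, 0 ≤ a →
      {u | a < |((Set.Ioo 0 t).indicator (fun _ => v)) u|}
        = if a < v then Set.Ioo 0 t else ∅ := by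
    intro a ha
    ext u
    simp only [Set.mem_setOf_eq, habs]
    by_cases hu : u ∈ Set.Ioo 0 t
    · by_cases hav : a < v <;> simp [hu, hav]
    · by_cases hav : a < v <;> simp [hu, hav, ha.not_gt]
  have hnu : ∀ a : ℝ, 0 ≤ a →
      nu {u | a < |((Set.Ioo 0 t).indicator (fun _ => v)) u|}
        = if a < v then ENNReal.ofReal t else 0 := by
    intro a ha
    rw [hset a ha]
    by_cases hav : a < v
    · simp only [hav, if_true]
      rw [nu, Measure.restrict_apply measurableSet_Ioo,
        Set.inter_eq_left.2 (Set.Ioo_subset_Ioo le_rfl ht1), Real.volume_Ioo, sub_zero]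
    · simp [hav]
  have hS : {a : ℝ | 0 ≤ a ∧ nu {u | a < |((Set.Ioo 0 t).indicator (fun _ => v)) u|}
      ≤ ENNReal.ofReal s} = if s < t then Set.Ici v else Set.Ici 0 := by
    ext a
    simp only [Set.mem_setOf_eq]
    constructor
    · rintro ⟨ha, hle⟩
      rw [hnu a ha] at hle
      by_cases hst : s < t
      · simp only [hst, if_true, Set.mem_Ici]
        by_contra hav
        push_neg at hav
        rw [if_pos hav] at hle
        have : t ≤ s := by
          rcases le_or_gt s 0 with hs | hs
          · rw [ENNReal.ofReal_eq_zero.2 hs, nonpos_iff_eq_zero, ENNReal.ofReal_eq_zero] at hle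
            linarith
          · exact (ENNReal.ofReal_le_ofReal_iff hs.le).1 hle
        linarith
      · simpa [hst]
    · intro haI
      by_cases hst : s < t
      · rw [if_pos hst, Set.mem_Ici] at haI
        refine ⟨le_trans hv.le haI, ?_⟩
        rw [hnu a (le_trans hv.le haI), if_neg (not_lt.2 haI)]
        exact zero_le
      · rw [if_neg hst, Set.mem_Ici] at haI
        refine ⟨haI, ?_⟩
        rw [hnu a haI]
        by_cases hav : a < v
        · rw [if_pos hav]
          exact ENNReal.ofReal_le_ofReal (not_lt.1 hst)
        · rw [if_neg hav]; exact zero_le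
  rw [mu, hS]
  by_cases hst : s < t <;> simp [hst, csInf_Ici]

lemma psi_eq (t : ℝ) (ht : 0 < t) : psi t = 1 / (1 - Real.log t) := by
  rw [psi, Real.log_div (Real.exp_ne_zero 1) ht.ne', Real.log_exp]

lemma one_sub_log_pos (t : ℝ) (ht : 0 < t) (ht1 : t ≤ 1) : 0 < 1 - Real.log t := by
  nlinarith [Real.log_nonpos ht.le ht1]

lemma t_mul_one_sub_log_le (t : ℝ) (ht : 0 < t) (ht1 : t ≤ 1) :
    t * (1 - Real.log t) ≤ 1 := by
  have h := Real.log_le_sub_one_of_pos (x := 1 / t) (by positivity)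
  rw [Real.log_div one_ne_zero ht.ne', Real.log_one] at h
  have : 1 - Real.log t ≤ 1 / t := by linarith
  calc t * (1 - Real.log t) ≤ t * (1 / t) := by
        exact mul_le_mul_of_nonneg_left this ht.le
    _ = 1 := by field_simp

lemma integral_mu_ind (v t t' : ℝ) (hv : 0 < v) (ht : 0 < t) (ht1 : t ≤ 1)
    (ht' : 0 < t') :
    ∫ s in Set.Ioc (0:ℝ) t', mu ((Set.Ioo 0 t).indicator (fun _ => v)) s
      = v * min t t' := by
  have heq : (fun s => mu ((Set.Ioo 0 t).indicator (fun _ => v)) s)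
      = (Set.Iio t).indicator (fun _ => v) := by
    funext s
    rw [mu_ind v t hv ht ht1 s, Set.indicator_apply]
    simp [Set.mem_Iio]
  rw [heq, MeasureTheory.setIntegral_indicator measurableSet_Iio,
    MeasureTheory.setIntegral_const]
  rcases le_or_gt t t' with h | h
  · have : Set.Ioc (0:ℝ) t' ∩ Set.Iio t = Set.Ioo 0 t := by
      ext x; simp only [Set.mem_inter_iff, Set.mem_Ioc, Set.mem_Iio, Set.mem_Ioo]
      constructor
      · rintro ⟨⟨h1, h2⟩, h3⟩; exact ⟨h1, h3⟩
      · rintro ⟨h1, h2⟩; exact ⟨⟨h1, le_trans h2.le h⟩, h2⟩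
    rw [this, Real.volume_real_Ioo_of_le ht.le, sub_zero,
      min_eq_left h, smul_eq_mul]
    ring
  · have : Set.Ioc (0:ℝ) t' ∩ Set.Iio t = Set.Ioc 0 t' := by
      ext x; simp only [Set.mem_inter_iff, Set.mem_Ioc, Set.mem_Iio]
      exact ⟨fun ⟨a, _⟩ => a, fun a => ⟨a, lt_of_le_of_lt a.2 h⟩⟩
    rw [this, Real.volume_real_Ioc_of_le ht'.le, sub_zero,
      min_eq_right h.le, smul_eq_mul]
    ring

lemma mpsi_mem (v t : ℝ) (hv : 0 < v) (ht : 0 < t) (ht1 : t ≤ 1) :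
    v * t * (1 - Real.log t) ≤ MpsiNorm ((Set.Ioo 0 t).indicator (fun _ => v)) := by
  set f := (Set.Ioo 0 t).indicator (fun _ => v) with hf
  have hbdd : BddAbove {r : ℝ | ∃ t' ∈ Set.Ioc (0:ℝ) 1,
      r = (∫ s in Set.Ioc (0:ℝ) t', mu f s) / psi t'} := by
    refine ⟨v, ?_⟩
    rintro r ⟨t', ⟨ht'0, ht'1⟩, rfl⟩
    rw [integral_mu_ind v t t' hv ht ht1 ht'0, psi_eq t' ht'0, div_div_eq_mul_div,
      div_one]
    calc v * min t t' * (1 - Real.log t') ≤ v * t' * (1 - Real.log t') :=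
          mul_le_mul_of_nonneg_right
            (mul_le_mul_of_nonneg_left (min_le_right t t') hv.le)
            (one_sub_log_pos t' ht'0 ht'1).le
      _ ≤ v * 1 := by
          rw [mul_assoc]
          exact mul_le_mul_of_nonneg_left (t_mul_one_sub_log_le t' ht'0 ht'1) hv.le
      _ = v := mul_one v
  have hmem : v * t * (1 - Real.log t) ∈ {r : ℝ | ∃ t' ∈ Set.Ioc (0:ℝ) 1,
      r = (∫ s in Set.Ioc (0:ℝ) t', mu f s) / psi t'} := by
    refine ⟨t, ⟨ht, ht1⟩, ?_⟩
    rw [integral_mu_ind v t t hv ht ht1 ht, psi_eq t ht, div_div_eq_mul_div,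
      div_one, min_self, mul_assoc]
  exact le_csSup hbdd hmem

/-- If `N` is an Orlicz function such that `L_N(0,1)` embeds continuously into the
Marcinkiewicz space `M_ψ(0,1)` (`‖f‖_{M_ψ} ≤ c_N ‖f‖_{L_N}`, expressed via the
Luxemburg norm: `∫_0^1 N(|f|/λ) ≤ 1` implies `‖f‖_{M_ψ} ≤ c_N λ`), then
`N(v) ≥ c·v·log(e+v)` for all `v` beyond some `c'`; consequently
`L_N(0,1) ⊆ L_M(0,1)` where `M(t) = t·log(e+t)`. -/
theorem stmt17 (N : ℝ → ℝ) (hconv : ConvexOn ℝ (Set.Ici 0) N)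
    (hmono : MonotoneOn N (Set.Ici 0)) (hN0 : N 0 = 0)
    (hembed : ∃ cN > (0:ℝ), ∀ f : ℝ → ℝ, Measurable f → ∀ lam : ℝ, 0 < lam →
      IntegrableOn (fun u => N (|f u| / lam)) (Set.Ioo 0 1) →
      (∫ u in Set.Ioo (0:ℝ) 1, N (|f u| / lam)) ≤ 1 → MpsiNorm f ≤ cN * lam) :
    (∃ c > (0:ℝ), ∃ c' > (0:ℝ), ∀ v : ℝ, c' < v →
        c * (v * Real.log (Real.exp 1 + v)) ≤ N v) ∧
    ∀ f : ℝ → ℝ, Measurable f → MemOrlicz N f →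
      MemOrlicz (fun t => t * Real.log (Real.exp 1 + t)) f := by
  obtain ⟨cN, hcN, hemb⟩ := hembed
  have hNnonneg : ∀ w : ℝ, 0 ≤ w → 0 ≤ N w := by
    intro w hw
    rw [← hN0]
    exact hmono (Set.mem_Ici.2 le_rfl) (Set.mem_Ici.2 hw) hw
  -- Key inequality from testing the embedding on indicator functions
  have keyA : ∀ v : ℝ, 0 < v → ∀ t : ℝ, 0 < t → t ≤ 1 → t * N v ≤ 1 →
      v * t * (1 - Real.log t) ≤ cN := by
    intro v hv t ht ht1 htN
    set f := (Set.Ioo 0 t).indicator (fun _ => v) with hfdef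
    have hfm : Measurable f := measurable_const.indicator measurableSet_Ioo
    have hfun : (fun u => N (|f u| / 1)) = (Set.Ioo 0 t).indicator (fun _ => N v) := by
      funext u
      by_cases hu : u ∈ Set.Ioo 0 t
      · simp [hfdef, Set.indicator_of_mem hu, abs_of_nonneg hv.le]
      · simp [hfdef, Set.indicator_of_notMem hu, hN0]
    have hint : IntegrableOn (fun u => N (|f u| / 1)) (Set.Ioo 0 1) := by
      rw [hfun]
      refine (integrable_indicator_iff measurableSet_Ioo).2 ?_
      exact integrableOn_const (ne_of_lt (by
        rw [Measure.restrict_apply measurableSet_Ioo]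
        exact lt_of_le_of_lt (measure_mono Set.inter_subset_left)
          (by rw [Real.volume_Ioo]; exact ENNReal.ofReal_lt_top)))
    have hval : (∫ u in Set.Ioo (0:ℝ) 1, N (|f u| / 1)) = t * N v := by
      rw [hfun, MeasureTheory.setIntegral_indicator measurableSet_Ioo,
        MeasureTheory.setIntegral_const]
      have : Set.Ioo (0:ℝ) 1 ∩ Set.Ioo 0 t = Set.Ioo 0 t :=
        Set.inter_eq_right.2 (Set.Ioo_subset_Ioo le_rfl ht1)
      rw [this, Real.volume_real_Ioo_of_le ht.le, sub_zero, smul_eq_mul]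
    have hle := hemb f hfm 1 one_pos hint (by rw [hval]; exact htN)
    rw [mul_one] at hle
    exact le_trans (mpsi_mem v t hv ht ht1) hle
  -- N v > 1 for v > cN
  have hN1 : ∀ v : ℝ, cN < v → 1 < N v := by
    intro v hv
    by_contra h
    push_neg at h
    have := keyA v (lt_trans hcN hv) 1 one_pos le_rfl (by rwa [one_mul])
    rw [Real.log_one] at this
    nlinarith
  -- the central estimate
  have hNlog : ∀ v : ℝ, cN < v → v * (1 + Real.log (N v)) ≤ cN * N v := by
    intro v hv
    have h1 : 1 < N v := hN1 v hv
    have hNpos : 0 < N v := lt_trans one_pos h1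
    have ht : 0 < 1 / N v := by positivity
    have ht1 : 1 / N v ≤ 1 := by rw [div_le_one hNpos]; exact h1.le
    have hA := keyA v (lt_trans hcN hv) (1 / N v) ht ht1
      (by rw [div_mul_cancel₀]; exact hNpos.ne')
    rw [Real.log_div one_ne_zero hNpos.ne', Real.log_one, zero_sub, sub_neg_eq_add]
      at hA
    have hkey : v * (1 + Real.log (N v))
        = v * (1 / N v) * (1 + Real.log (N v)) * N v := by
      field_simp
    linarith [mul_le_mul_of_nonneg_right hA hNpos.le]
  -- part 1
  have hmain : ∃ c > (0:ℝ), ∃ c' > (0:ℝ), ∀ v : ℝ, c' < v →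
      c * (v * Real.log (Real.exp 1 + v)) ≤ N v := by
    refine ⟨1 / (2 * cN), by positivity, max (Real.exp 1) (cN ^ 2),
      lt_max_of_lt_left (Real.exp_pos 1), ?_⟩
    intro v hv
    have hev : Real.exp 1 ≤ v := ((le_max_left _ _).trans hv.le)
    have hv0 : 0 < v := lt_of_lt_of_le (Real.exp_pos 1) hev
    have hvcN : cN < v := by
      rcases le_or_gt cN (Real.exp 1) with h | h
      · have : Real.exp 1 < v := lt_of_le_of_lt (le_max_left _ _) hv
        linarith
      · have h1 : (1:ℝ) < Real.exp 1 := by linarith [Real.add_one_le_exp 1]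
        nlinarith [le_trans (le_max_right (Real.exp 1) (cN ^ 2)) hv.le]
    have h1 : 1 < N v := hN1 v hvcN
    have hNpos : 0 < N v := lt_trans one_pos h1
    have hlog := hNlog v hvcN
    -- v ≤ cN * N v
    have hlin : v ≤ cN * N v := by nlinarith [Real.log_nonneg h1.le]
    -- F2 : log v - log cN ≤ log (N v)
    have hF2 : Real.log v - Real.log cN ≤ Real.log (N v) := by
      have hdle : v / cN ≤ N v := (div_le_iff₀ hcN).2 (by linarith [mul_comm cN (N v)])
      have := Real.log_le_log (by positivity) hdle
      rwa [Real.log_div hv0.ne' hcN.ne'] at this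
    -- F3 : 2 log cN ≤ log v
    have hF3 : 2 * Real.log cN ≤ Real.log v := by
      have hsq : cN ^ 2 ≤ v := (le_max_right _ _).trans hv.le
      have := Real.log_le_log (by positivity) hsq
      rwa [Real.log_pow, Nat.cast_ofNat] at this
    -- F1 : log (e + v) ≤ log 2 + log v
    have hF1 : Real.log (Real.exp 1 + v) ≤ Real.log 2 + Real.log v := by
      have : Real.exp 1 + v ≤ 2 * v := by linarith
      have h := Real.log_le_log (by positivity) this
      rwa [Real.log_mul two_ne_zero hv0.ne'] at h
    have hF4 : Real.log 2 ≤ 1 := by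
      rw [← Real.log_exp 1]
      exact Real.log_le_log two_pos (by linarith [Real.add_one_le_exp 1])
    have hG : Real.log (Real.exp 1 + v) ≤ 2 * (1 + Real.log (N v)) := by linarith
    rw [one_div, inv_mul_le_iff₀ (by positivity)]
    nlinarith [mul_le_mul_of_nonneg_left hG hv0.le]
  refine ⟨hmain, ?_⟩
  -- part 2
  obtain ⟨c, hc, c', hc', hpt⟩ := hmain
  rintro f hf ⟨lam, hlam, hint⟩
  refine ⟨lam, hlam, ?_⟩
  set g : ℝ → ℝ := fun u =>
    c' * Real.log (Real.exp 1 + c') + (1 / c) * N (|f u| / lam) with hgdef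
  have hgint : IntegrableOn g (Set.Ioo 0 1) := by
    refine Integrable.add ?_ (hint.const_mul _)
    exact integrableOn_const (ne_of_lt (by
      rw [Real.volume_Ioo]
      exact ENNReal.ofReal_lt_top))
  have hm : Measurable fun u => (|f u| / lam) * Real.log (Real.exp 1 + |f u| / lam) := by
    have h1 : Measurable fun u => |f u| / lam := hf.abs.div_const lam
    exact h1.mul (Real.measurable_log.comp (measurable_const.add h1))
  refine Integrable.mono' hgint hm.aestronglyMeasurable
    (Filter.Eventually.of_forall ?_)
  intro u
  set w : ℝ := |f u| / lam with hw
  have hw0 : 0 ≤ w := by positivity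
  have hlogw : 1 ≤ Real.log (Real.exp 1 + w) := by
    rw [Real.le_log_iff_exp_le (by positivity)]
    linarith
  have hMnonneg : 0 ≤ w * Real.log (Real.exp 1 + w) := by nlinarith
  rw [Real.norm_eq_abs, abs_of_nonneg hMnonneg]
  have hNw : 0 ≤ N w := hNnonneg w hw0
  rcases le_or_gt w c' with hcase | hcase
  · have hlog2 : Real.log (Real.exp 1 + w) ≤ Real.log (Real.exp 1 + c') :=
      Real.log_le_log (by positivity) (by linarith)
    have : w * Real.log (Real.exp 1 + w) ≤ c' * Real.log (Real.exp 1 + c') := by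
      nlinarith
    have : (0:ℝ) ≤ (1 / c) * N w := by positivity
    simp only [hgdef]
    nlinarith [hlog2, hw0, hlogw]
  · have := hpt w hcase
    have hlogc' : 0 ≤ Real.log (Real.exp 1 + c') := by
      have : (1:ℝ) ≤ Real.log (Real.exp 1 + c') := by
        rw [Real.le_log_iff_exp_le (by positivity)]
        linarith [Real.exp_pos 1]
      linarith
    have hwM : w * Real.log (Real.exp 1 + w) ≤ (1 / c) * N w := by
      rw [one_div, le_inv_mul_iff₀ hc]
      linarith [this]
    simp only [hgdef]
    nlinarith [hlogc', hc'.le]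
end
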